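/- Let π be a permutation of size n, different from the identity, with k left-to-right maxima and whose longest suffix of left-to-right maxima has length m ≥ 1. Then the number of leaves of the tree T(π) of iterated bubblesort preimages is ∑_{j=1}^{m−1} j!·j·(j+1)^(k−j−1) + m!·(m+1)^(k−m). Moreover, the number of leaves at height j is j!·j·(j+1)^(k−j−1) for 1 ≤ j < m, and m!·(m+1)^(k−m) for j = m. -/

import Mathlib

/-- One pass of bubblesort on a list of naturals. -/
def bpass : List ℕ → List ℕ
  | [] => []
  | [a] => [a]
  | a :: b :: l => if b < a then b :: bpass (a :: l) else a :: bpass (b :: l)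

/-- The identity permutation 1 2 ... n as a list. -/
def idList (n : ℕ) : List ℕ := List.map (· + 1) (List.range n)

/-- `l` is (the word of) a permutation of size `n`, i.e. a rearrangement of 1,...,n. -/
def IsPermList (n : ℕ) (l : List ℕ) : Prop := l.Perm (idList n)

/-- position `j` of `l` holds a left-to-right maximum. -/
def IsLTRMax (l : List ℕ) (j : ℕ) : Prop :=
  j < l.length ∧ ∀ i < j, l.getD i 0 < l.getD j 0

instance (l : List ℕ) (j : ℕ) : Decidable (IsLTRMax l j) := by
  unfold IsLTRMax; infer_instance

/-- the number of left-to-right maxima of `l`. -/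
def ltrCount (l : List ℕ) : ℕ :=
  ((List.range l.length).filter fun j => decide (IsLTRMax l j)).length

/-- the length of the longest suffix of `l` consisting of left-to-right maxima. -/
def suffLen (l : List ℕ) : ℕ :=
  ((List.range l.length).takeWhile fun j => decide (IsLTRMax l (l.length - 1 - j))).length

/-- `σ` is a node of the tree `T(π)` of iterated bubblesort preimages. -/
def IsNode (n : ℕ) (π σ : List ℕ) : Prop :=
  IsPermList n σ ∧ ∃ j, bpass^[j] σ = π

/-- `σ` is a node of `T(π)` at height `j` (j passes needed to reach π, and no fewer). -/
def IsNodeAt (n : ℕ) (π σ : List ℕ) (j : ℕ) : Prop :=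
  IsPermList n σ ∧ bpass^[j] σ = π ∧ ∀ i < j, bpass^[i] σ ≠ π

/-- `τ` is a leaf: it has no child, i.e. no bubblesort preimage other than itself. -/
def IsLeafNode (n : ℕ) (τ : List ℕ) : Prop :=
  ¬ ∃ ρ, IsPermList n ρ ∧ ρ ≠ τ ∧ bpass ρ = τ

/-- `T(π)` and `T(τ)` are isomorphic as rooted trees: there is a bijection between
their node sets sending root to root and commuting with the parent map `bpass`. -/
def TreeIso (n : ℕ) (π τ : List ℕ) : Prop :=
  ∃ φ : List ℕ → List ℕ,
    (∀ σ, IsNode n π σ → IsNode n τ (φ σ)) ∧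
    (∀ σ σ', IsNode n π σ → IsNode n π σ' → φ σ = φ σ' → σ = σ') ∧
    (∀ ρ, IsNode n τ ρ → ∃ σ, IsNode n π σ ∧ φ σ = ρ) ∧
    φ π = τ ∧
    (∀ σ, IsNode n π σ → σ ≠ π → φ (bpass σ) = bpass (φ σ))

section BubbleAux
@[simp] theorem bpass_nil : bpass [] = [] := by simp [bpass]
@[simp] theorem bpass_single (a : ℕ) : bpass [a] = [a] := by simp [bpass]
theorem bpass_cons2 (a b : ℕ) (l : List ℕ) :
    bpass (a :: b :: l) = if b < a then b :: bpass (a :: l) else a :: bpass (b :: l) := by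
  simp [bpass]

theorem bpass_perm (l : List ℕ) : (bpass l).Perm l := by
  induction l using bpass.induct with
  | case1 => simp
  | case2 a => simp
  | case3 a b l h ih =>
    rw [bpass_cons2, if_pos h]
    exact (ih.cons b).trans (List.Perm.swap a b l)
  | case4 a b l h ih =>
    rw [bpass_cons2, if_neg h]
    exact ih.cons a

theorem bpass_length (l : List ℕ) : (bpass l).length = l.length :=
  (bpass_perm l).length_eq

theorem bpass_cons_max (M : ℕ) (y : List ℕ) (hy : ∀ a ∈ y, a < M) :
    bpass (M :: y) = y ++ [M] := by
  induction y with
  | nil => simp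
  | cons b y ih =>
    rw [bpass_cons2, if_pos (hy b (by simp))]
    rw [ih (fun a ha => hy a (by simp [ha]))]
    rfl

theorem bpass_append (x : List ℕ) (M : ℕ) (y : List ℕ)
    (hx : ∀ a ∈ x, a < M) (hy : ∀ a ∈ y, a < M) :
    bpass (x ++ M :: y) = bpass x ++ (y ++ [M]) := by
  induction x using bpass.induct generalizing y with
  | case1 => simpa using bpass_cons_max M y hy
  | case2 a =>
    have ha : a < M := hx a (by simp)
    show bpass (a :: M :: y) = _
    rw [bpass_cons2, if_neg (by omega), bpass_cons_max M y hy]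
    simp
  | case3 a b l h ih =>
    show bpass (a :: b :: (l ++ M :: y)) = _
    rw [bpass_cons2, if_pos h, bpass_cons2, if_pos h]
    rw [show a :: (l ++ M :: y) = (a :: l) ++ M :: y by rfl] at *
    rw [ih y (fun c hc => hx c (by simp at hc ⊢; tauto)) hy]
    rfl
  | case4 a b l h ih =>
    show bpass (a :: b :: (l ++ M :: y)) = _
    rw [bpass_cons2, if_neg h, bpass_cons2, if_neg h]
    rw [show b :: (l ++ M :: y) = (b :: l) ++ M :: y by rfl] at *
    rw [ih y (fun c hc => hx c (by simp at hc ⊢; tauto)) hy]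
    rfl

theorem bpass_iter_perm (s : ℕ) (l : List ℕ) : (bpass^[s] l).Perm l := by
  induction s generalizing l with
  | zero => simp
  | succ s ih =>
    rw [Function.iterate_succ_apply]
    exact (ih (bpass l)).trans (bpass_perm l)

theorem bpass_snoc (z : List ℕ) (M : ℕ) (hz : ∀ a ∈ z, a < M) :
    bpass (z ++ [M]) = bpass z ++ [M] := by
  simpa using bpass_append z M [] hz (by simp)

theorem bpass_iter_snoc (s : ℕ) (z : List ℕ) (M : ℕ) (hz : ∀ a ∈ z, a < M) :
    bpass^[s] (z ++ [M]) = bpass^[s] z ++ [M] := by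
  induction s generalizing z with
  | zero => simp
  | succ s ih =>
    rw [Function.iterate_succ_apply, Function.iterate_succ_apply,
      bpass_snoc z M hz, ih]
    exact fun a ha => hz a ((bpass_perm z).mem_iff.mp ha)

theorem exists_max_split (l : List ℕ) (hn : l.Nodup) (hne : l ≠ []) :
    ∃ x M y, l = x ++ M :: y ∧ (∀ a ∈ x, a < M) ∧ (∀ a ∈ y, a < M) := by
  obtain ⟨M, hM⟩ : ∃ M, l.maximum = some M := by
    cases h : l.maximum with
    | bot => exact absurd (List.maximum_eq_bot.mp h) hne
    | coe M => exact ⟨M, rfl⟩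
  have hMmem : M ∈ l := List.maximum_mem hM
  obtain ⟨x, y, rfl⟩ := List.append_of_mem hMmem
  have hnd : M ∉ x ∧ M ∉ y := by
    have := List.nodup_middle.mp hn
    simp only [List.nodup_cons, List.mem_append] at this
    tauto
  refine ⟨x, M, y, rfl, ?_, ?_⟩ <;> intro a ha <;>
    exact lt_of_le_of_ne (List.le_maximum_of_mem (by simp [ha]) hM)
      (fun h => by subst h; tauto)

theorem bpass_iter_sorted (l : List ℕ) (hn : l.Nodup) (t : ℕ) (ht : l.length ≤ t) :
    (bpass^[t] l).Pairwise (· ≤ ·) := by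
  induction t using Nat.strong_induction_on generalizing l with
  | _ t ih =>
    rcases eq_or_ne l [] with rfl | hne
    · rw [Function.iterate_fixed bpass_nil]; simp
    obtain ⟨x, M, y, rfl, hx, hy⟩ := exists_max_split l hn hne
    have hlen : 0 < (x ++ M :: y).length := by simp
    obtain ⟨s, rfl⟩ : ∃ s, t = s + 1 := ⟨t - 1, by omega⟩
    rw [Function.iterate_succ_apply, bpass_append x M y hx hy,
      show bpass x ++ (y ++ [M]) = (bpass x ++ y) ++ [M] by simp,
      bpass_iter_snoc s _ M (by
        intro a ha
        rcases List.mem_append.mp ha with h | h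
        · exact hx a ((bpass_perm x).mem_iff.mp h)
        · exact hy a h)]
    have hlt : (bpass x ++ y).length < (x ++ M :: y).length := by
      simp [bpass_length]
    have hperm : (bpass x ++ y).Perm (x ++ y) := (bpass_perm x).append_right y
    have hnd2 : (bpass x ++ y).Nodup := hperm.nodup_iff.mpr (by
      have := List.nodup_middle.mp hn
      exact this.of_cons)
    have hsorted := ih s (by simp at ht; omega) _ hnd2 (by
      have := bpass_length x
      simp [bpass_length] at ht ⊢
      omega)
    rw [List.pairwise_append]
    refine ⟨hsorted, by simp, ?_⟩
    intro a ha b hb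
    simp at hb
    subst hb
    have : a ∈ bpass x ++ y := (bpass_iter_perm s _).mem_iff.mp ha
    rcases List.mem_append.mp this with h | h
    · exact le_of_lt (hx a ((bpass_perm x).mem_iff.mp h))
    · exact le_of_lt (hy a h)

theorem idList_sorted (n : ℕ) : (idList n).Pairwise (· ≤ ·) := by
  unfold idList
  rw [List.pairwise_map]
  exact (List.pairwise_le_range (n := n)).imp (by intro a b h; simpa using h)

theorem idList_length (n : ℕ) : (idList n).length = n := by simp [idList]

theorem idList_nodup (n : ℕ) : (idList n).Nodup := by
  apply List.Nodup.map
  · intro a b h; simpa using h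
  · exact List.nodup_range

theorem idList_pos (n : ℕ) : ∀ a ∈ idList n, 0 < a := by
  intro a ha
  simp only [idList, List.mem_map, List.mem_range] at ha
  obtain ⟨b, _, rfl⟩ := ha
  simp

theorem eq_idList_of_iter_fix (n d : ℕ) (π : List ℕ) (hπ : IsPermList n π)
    (hd : 1 ≤ d) (h : bpass^[d] π = π) : π = idList n := by
  have hlen : π.length = n := by rw [hπ.length_eq, idList_length]
  have hc : ∀ c, bpass^[c * d] π = π := by
    intro c
    induction c with
    | zero => simp
    | succ c ih => rw [Nat.succ_mul, Function.iterate_add_apply, h, ih]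
  have hnd : π.Nodup := hπ.nodup_iff.mpr (idList_nodup n)
  have hs : (bpass^[n * d] π).Pairwise (· ≤ ·) :=
    bpass_iter_sorted π hnd _ (by calc π.length = n := hlen
      _ ≤ n * d := Nat.le_mul_of_pos_right n hd)
  rw [hc n] at hs
  exact List.Perm.eq_of_pairwise' hs (idList_sorted n) hπ

def rcnt (c : ℕ) : List ℕ → ℕ
  | [] => 0
  | a :: l => if c < a then rcnt a l + 1 else rcnt c l

@[simp] theorem rcnt_nil (c : ℕ) : rcnt c [] = 0 := rfl
theorem rcnt_cons (c a : ℕ) (l : List ℕ) :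
    rcnt c (a :: l) = if c < a then rcnt a l + 1 else rcnt c l := rfl

theorem rcnt_eq_zero (c : ℕ) (l : List ℕ) (h : ∀ a ∈ l, a ≤ c) : rcnt c l = 0 := by
  induction l generalizing c with
  | nil => rfl
  | cons a l ih =>
    rw [rcnt_cons, if_neg (by simp [Nat.not_lt]; exact h a (by simp))]
    exact ih c (fun b hb => h b (by simp [hb]))

theorem foldl_max_lt (c a : ℕ) (l : List ℕ) :
    l.foldl max c < a ↔ c < a ∧ ∀ x ∈ l, x < a := by
  induction l generalizing c with
  | nil => simp
  | cons b l ih =>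
    simp only [List.foldl_cons, ih, Nat.max_lt, List.mem_cons]
    constructor
    · rintro ⟨⟨h1, h2⟩, h3⟩; exact ⟨h1, fun x hx => by rcases hx with rfl | hx; exacts [h2, h3 x hx]⟩
    · rintro ⟨h1, h2⟩; exact ⟨⟨h1, h2 b (Or.inl rfl)⟩, fun x hx => h2 x (Or.inr hx)⟩

theorem rcnt_snoc (c a : ℕ) (l : List ℕ) :
    rcnt c (l ++ [a]) = rcnt c l + if l.foldl max c < a then 1 else 0 := by
  induction l generalizing c with
  | nil => by_cases h : c < a <;> simp [rcnt_cons, h]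
  | cons b l ih =>
    simp only [List.cons_append, rcnt_cons, List.foldl_cons]
    by_cases h : c < b
    · rw [if_pos h, if_pos h, ih b]
      have hmax : c ⊔ b = b := max_eq_right h.le
      simp only [hmax]; ring
    · rw [if_neg h, if_neg h, ih c]
      have hmax : c ⊔ b = c := max_eq_left (Nat.not_lt.mp h)
      simp only [hmax]

theorem rcnt_snoc_lt (c a : ℕ) (l : List ℕ) (hc : c < a) (h : ∀ x ∈ l, x < a) :
    rcnt c (l ++ [a]) = rcnt c l + 1 := by
  rw [rcnt_snoc, if_pos ((foldl_max_lt c a l).mpr ⟨hc, h⟩)]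

theorem rcnt_snoc_not (c a : ℕ) (l : List ℕ) (h : ¬(c < a ∧ ∀ x ∈ l, x < a)) :
    rcnt c (l ++ [a]) = rcnt c l := by
  rw [rcnt_snoc, if_neg (fun hh => h ((foldl_max_lt c a l).mp hh))]
  ring

theorem rcnt_pos (l : List ℕ) (hne : l ≠ []) (hpos : ∀ a ∈ l, 0 < a) : 1 ≤ rcnt 0 l := by
  match l with
  | a :: l =>
    rw [rcnt_cons, if_pos (hpos a (by simp))]
    omega

theorem rcnt_middle (x y : List ℕ) (M c : ℕ) (hx : ∀ a ∈ x, a < M) (hy : ∀ a ∈ y, a < M)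
    (hc : c < M) : rcnt c (x ++ M :: y) = rcnt c x + 1 := by
  induction x generalizing c with
  | nil =>
    simp only [List.nil_append, rcnt_cons, if_pos hc, rcnt_nil]
    rw [rcnt_eq_zero M y (fun a ha => le_of_lt (hy a ha))]
  | cons b x ih =>
    simp only [List.cons_append, rcnt_cons]
    by_cases h : c < b
    · rw [if_pos h, if_pos h, ih b (fun a ha => hx a (by simp [ha])) (hx b (by simp))]
    · rw [if_neg h, if_neg h, ih c (fun a ha => hx a (by simp [ha])) hc]

def mrecAux : List ℕ → ℕ
  | [] => 0
  | a :: l => if ∀ x ∈ l, x < a then mrecAux l + 1 else 0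

def mrec (l : List ℕ) : ℕ := mrecAux l.reverse

@[simp] theorem mrec_nil : mrec [] = 0 := rfl

theorem mrec_snoc (a : ℕ) (l : List ℕ) :
    mrec (l ++ [a]) = if ∀ x ∈ l, x < a then mrec l + 1 else 0 := by
  unfold mrec
  rw [List.reverse_append]
  show mrecAux (a :: l.reverse) = _
  rw [show mrecAux (a :: l.reverse) =
    if ∀ x ∈ l.reverse, x < a then mrecAux l.reverse + 1 else 0 from by rw [mrecAux]]
  simp only [List.mem_reverse]

theorem mrec_le_rcnt (l : List ℕ) (hpos : ∀ a ∈ l, 0 < a) : mrec l ≤ rcnt 0 l := by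
  induction l using List.reverseRecOn with
  | nil => simp
  | append_singleton l a ih =>
    rw [mrec_snoc, rcnt_snoc]
    have hp : ∀ b ∈ l, 0 < b := fun b hb => hpos b (by simp [hb])
    by_cases h : ∀ x ∈ l, x < a
    · rw [if_pos h, if_pos ((foldl_max_lt 0 a l).mpr ⟨hpos a (by simp), h⟩)]
      exact Nat.add_le_add (ih hp) le_rfl
    · rw [if_neg h]; omega

theorem sorted_of_rcnt_eq_mrec (l : List ℕ) (hpos : ∀ a ∈ l, 0 < a)
    (h : rcnt 0 l = mrec l) : l.Pairwise (· ≤ ·) := by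
  induction l using List.reverseRecOn with
  | nil => simp
  | append_singleton l a ih =>
    have hp : ∀ b ∈ l, 0 < b := fun b hb => hpos b (by simp [hb])
    by_cases hall : ∀ x ∈ l, x < a
    · rw [mrec_snoc, if_pos hall, rcnt_snoc_lt 0 a l (hpos a (by simp)) hall] at h
      have hs := ih hp (by omega)
      rw [List.pairwise_append]
      exact ⟨hs, by simp, fun b hb c hc => by simp at hc; subst hc; exact le_of_lt (hall b hb)⟩
    · exfalso
      rw [mrec_snoc, if_neg hall, rcnt_snoc] at h
      rcases List.eq_nil_or_concat l with rfl | ⟨l', b, rfl⟩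
      · simp at hall
      · simp only [List.concat_eq_append] at *
        have := rcnt_pos (l' ++ [b]) (by simp) hp
        omega

theorem isLTRMax_append (l l' : List ℕ) (j : ℕ) (hj : j < l.length) :
    IsLTRMax (l ++ l') j ↔ IsLTRMax l j := by
  unfold IsLTRMax
  constructor
  · rintro ⟨-, h⟩
    refine ⟨hj, fun i hi => ?_⟩
    have := h i hi
    rwa [List.getD_append _ _ _ _ (lt_trans hi hj), List.getD_append _ _ _ _ hj] at this
  · rintro ⟨-, h⟩
    refine ⟨by simp; omega, fun i hi => ?_⟩
    rw [List.getD_append _ _ _ _ (lt_trans hi hj), List.getD_append _ _ _ _ hj]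
    exact h i hi

theorem isLTRMax_last (l : List ℕ) (a : ℕ) :
    IsLTRMax (l ++ [a]) l.length ↔ ∀ x ∈ l, x < a := by
  unfold IsLTRMax
  have hlen : l.length < (l ++ [a]).length := by simp
  have hget : (l ++ [a]).getD l.length 0 = a := by
    rw [List.getD_eq_getElem _ _ hlen]
    exact List.getElem_concat_length rfl _
  constructor
  · rintro ⟨-, h⟩
    rw [← List.forall_getElem]
    intro i hi
    have := h i hi
    rwa [hget, List.getD_append _ _ _ _ hi, List.getD_eq_getElem _ _ hi] at this
  · intro h
    refine ⟨hlen, fun i hi => ?_⟩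
    rw [hget, List.getD_append _ _ _ _ hi, List.getD_eq_getElem _ _ hi]
    exact h _ (l.getElem_mem hi)

theorem ltrCount_snoc (l : List ℕ) (a : ℕ) :
    ltrCount (l ++ [a]) = ltrCount l + if ∀ x ∈ l, x < a then 1 else 0 := by
  unfold ltrCount
  have hlen : (l ++ [a]).length = l.length + 1 := by simp
  rw [hlen, List.range_succ, List.filter_append]
  simp only [List.length_append, List.filter_cons, List.filter_nil]
  have hfc : List.filter (fun j => decide (IsLTRMax (l ++ [a]) j)) (List.range l.length)
      = List.filter (fun j => decide (IsLTRMax l j)) (List.range l.length) := by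
    apply List.filter_congr
    intro j hj
    rw [decide_eq_decide]
    exact isLTRMax_append l [a] j (List.mem_range.mp hj)
  rw [hfc]
  by_cases h : ∀ x ∈ l, x < a
  · rw [if_pos (by rw [decide_eq_true_eq]; exact (isLTRMax_last l a).mpr h), if_pos h]
    simp
  · rw [if_neg (by rw [decide_eq_true_eq]; exact fun hh => h ((isLTRMax_last l a).mp hh)), if_neg h]
    simp

theorem takeWhile_congr {p q : ℕ → Bool} {l : List ℕ} (h : ∀ x ∈ l, p x = q x) :
    l.takeWhile p = l.takeWhile q := by
  induction l with
  | nil => rfl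
  | cons a l ih =>
    rw [List.takeWhile_cons, List.takeWhile_cons, h a (by simp)]
    by_cases hq : q a = true
    · rw [if_pos hq, if_pos hq, ih (fun x hx => h x (by simp [hx]))]
    · rw [if_neg hq, if_neg hq]

theorem suffLen_snoc (l : List ℕ) (a : ℕ) :
    suffLen (l ++ [a]) = if ∀ x ∈ l, x < a then suffLen l + 1 else 0 := by
  unfold suffLen
  have hlen : (l ++ [a]).length = l.length + 1 := by simp
  rw [hlen, List.range_succ_eq_map, List.takeWhile_cons]
  by_cases h : ∀ x ∈ l, x < a
  · rw [if_pos (by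
      simp only [Nat.add_sub_cancel, Nat.sub_zero, decide_eq_true_eq]
      exact (isLTRMax_last l a).mpr h), if_pos h]
    rw [List.takeWhile_map]
    simp only [List.length_cons, List.length_map]
    have ht := takeWhile_congr
      (p := (fun j => decide (IsLTRMax (l ++ [a]) (l.length + 1 - 1 - j))) ∘ Nat.succ)
      (q := fun j => decide (IsLTRMax l (l.length - 1 - j)))
      (l := List.range l.length) (by
        intro j hj
        have hj' : j < l.length := List.mem_range.mp hj
        simp only [Function.comp_apply, decide_eq_decide]
        have harith : l.length + 1 - 1 - Nat.succ j = l.length - 1 - j := by omega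
        rw [harith]
        exact isLTRMax_append l [a] _ (by omega))
    rw [ht]
  · rw [if_neg (by
      simp only [Nat.add_sub_cancel, Nat.sub_zero, decide_eq_true_eq]
      exact fun hh => h ((isLTRMax_last l a).mp hh)), if_neg h]
    simp

theorem ltrCount_eq_rcnt (l : List ℕ) (hpos : ∀ a ∈ l, 0 < a) : ltrCount l = rcnt 0 l := by
  induction l using List.reverseRecOn with
  | nil => rfl
  | append_singleton l a ih =>
    have hp : ∀ b ∈ l, 0 < b := fun b hb => hpos b (by simp [hb])
    rw [ltrCount_snoc, rcnt_snoc, ih hp]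
    congr 1
    by_cases h : ∀ x ∈ l, x < a
    · rw [if_pos h, if_pos ((foldl_max_lt 0 a l).mpr ⟨hpos a (by simp), h⟩)]
    · rw [if_neg h, if_neg (fun hh => h ((foldl_max_lt 0 a l).mp hh).2)]

theorem suffLen_eq_mrec (l : List ℕ) : suffLen l = mrec l := by
  induction l using List.reverseRecOn with
  | nil => rfl
  | append_singleton l a ih => rw [suffLen_snoc, mrec_snoc, ih]

noncomputable def Perms (γ : List ℕ) : Finset (List ℕ) := γ.permutations.toFinset

theorem mem_Perms {τ γ : List ℕ} : τ ∈ Perms γ ↔ τ.Perm γ := by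
  rw [Perms, List.mem_toFinset, List.mem_permutations]

noncomputable def fib (j : ℕ) (γ : List ℕ) : Finset (List ℕ) :=
  (Perms γ).filter (fun τ => bpass^[j] τ = γ)

theorem mem_fib {j : ℕ} {τ γ : List ℕ} : τ ∈ fib j γ ↔ τ.Perm γ ∧ bpass^[j] τ = γ := by
  rw [fib, Finset.mem_filter, mem_Perms]

theorem fib_zero (γ : List ℕ) : fib 0 γ = {γ} := by
  ext τ
  rw [mem_fib, Finset.mem_singleton]
  constructor
  · rintro ⟨-, h⟩; exact h
  · rintro rfl; exact ⟨List.Perm.refl _, rfl⟩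

def xpt (M : ℕ) (τ : List ℕ) : List ℕ := τ.takeWhile (· ≠ M)
def ypt (M : ℕ) (τ : List ℕ) : List ℕ := (τ.dropWhile (· ≠ M)).tail

theorem split_at (M : ℕ) (τ : List ℕ) (h : M ∈ τ) : xpt M τ ++ M :: ypt M τ = τ := by
  unfold xpt ypt
  induction τ with
  | nil => simp at h
  | cons a τ ih =>
    by_cases ha : a = M
    · subst ha
      rw [List.takeWhile_cons, List.dropWhile_cons]
      simp
    · rw [List.takeWhile_cons, List.dropWhile_cons]
      have : (a ≠ M : Bool) = true := by simp [ha]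
      rw [if_pos this, if_pos this]
      have hm : M ∈ τ := by
        rcases List.mem_cons.mp h with hh | hh
        · exact absurd hh.symm ha
        · exact hh
      simp only [List.cons_append, List.cons.injEq, true_and]
      exact ih hm

theorem xpt_spec (M : ℕ) (x y : List ℕ) (hx : M ∉ x) :
    xpt M (x ++ M :: y) = x ∧ ypt M (x ++ M :: y) = y := by
  unfold xpt ypt
  induction x with
  | nil => simp
  | cons a x ih =>
    have ha : a ≠ M := fun h => hx (by simp [h])
    have ha' : (a ≠ M : Bool) = true := by simp [ha]
    rw [List.cons_append, List.takeWhile_cons, List.dropWhile_cons, if_pos ha', if_pos ha']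
    have := ih (fun h => hx (by simp [h]))
    exact ⟨by rw [this.1], by rw [this.2]⟩

-- elements of a fiber member are below M
theorem snoc_perm_cons (γ' : List ℕ) (M : ℕ) : (γ' ++ [M]).Perm (M :: γ') := by
  simpa using (List.perm_middle (a := M) (l₁ := γ') (l₂ := ([] : List ℕ)))

theorem mid_perm {τ γ' : List ℕ} {M : ℕ} (h : τ.Perm (γ' ++ [M])) (hmem : M ∈ τ) :
    (xpt M τ ++ ypt M τ).Perm γ' := by
  have hsplit := split_at M τ hmem
  have hperm : (M :: (xpt M τ ++ ypt M τ)).Perm (M :: γ') := by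
    refine List.Perm.trans List.perm_middle.symm ?_
    rw [hsplit]
    exact h.trans (snoc_perm_cons γ' M)
  exact hperm.cons_inv

theorem fib_elts_lt {τ γ' : List ℕ} {M : ℕ} (hM : ∀ a ∈ γ', a < M)
    (h : τ.Perm (γ' ++ [M])) :
    ∀ a ∈ xpt M τ ++ ypt M τ, a < M := by
  have hmem : M ∈ τ := h.mem_iff.mpr (by simp)
  intro a ha
  exact hM a ((mid_perm h hmem).mem_iff.mp ha)

theorem T1 (γ' : List ℕ) (M : ℕ) (hM : ∀ a ∈ γ', a < M) (j : ℕ) (f : List ℕ → ℕ) :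
    ∑ τ ∈ fib (j+1) (γ' ++ [M]), f τ =
    ∑ τ' ∈ fib j γ', ∑ p ∈ Finset.range (τ'.length + 1), ∑ x ∈ fib 1 (List.take p τ'),
      f (x ++ M :: List.drop p τ') := by
  have key : ∑ τ ∈ fib (j+1) (γ' ++ [M]), f τ =
      ∑ s ∈ (fib j γ').sigma (fun τ' => (Finset.range (τ'.length + 1)).sigma
        (fun p => fib 1 (List.take p τ'))),
        f (s.2.2 ++ M :: List.drop s.2.1 s.1) := by
    apply Finset.sum_nbij'
      (i := fun τ => ⟨bpass (xpt M τ) ++ ypt M τ, (xpt M τ).length, xpt M τ⟩)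
      (j := fun s => s.2.2 ++ M :: List.drop s.2.1 s.1)
    · -- forward membership
      intro τ hτ
      rw [mem_fib] at hτ
      obtain ⟨hperm, hiter⟩ := hτ
      have hmem : M ∈ τ := hperm.mem_iff.mpr (by simp)
      have hsplit := split_at M τ hmem
      have hlt := fib_elts_lt hM hperm
      have hltx : ∀ a ∈ xpt M τ, a < M := fun a ha => hlt a (by simp [ha])
      have hlty : ∀ a ∈ ypt M τ, a < M := fun a ha => hlt a (by simp [ha])
      have hpermxy : (xpt M τ ++ ypt M τ).Perm γ' := mid_perm hperm hmem
      -- iterate computation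
      have hcalc : bpass^[j+1] τ = bpass^[j] (bpass (xpt M τ) ++ ypt M τ) ++ [M] := by
        conv_lhs => rw [← hsplit]
        rw [Function.iterate_succ_apply, bpass_append _ _ _ hltx hlty,
          show bpass (xpt M τ) ++ (ypt M τ ++ [M]) = (bpass (xpt M τ) ++ ypt M τ) ++ [M] by simp]
        apply bpass_iter_snoc
        intro a ha
        rcases List.mem_append.mp ha with h | h
        · exact hltx a ((bpass_perm _).mem_iff.mp h)
        · exact hlty a h
      rw [hcalc] at hiter
      have hiter' : bpass^[j] (bpass (xpt M τ) ++ ypt M τ) = γ' :=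
        (List.append_left_inj [M]).mp hiter
      simp only [Finset.mem_sigma]
      refine ⟨?_, ?_, ?_⟩
      · rw [mem_fib]
        exact ⟨((bpass_perm _).append_right _).trans hpermxy, hiter'⟩
      · rw [Finset.mem_range]
        have h1 := bpass_length (xpt M τ)
        simp only [List.length_append]
        omega
      · rw [mem_fib]
        have htake : List.take (xpt M τ).length (bpass (xpt M τ) ++ ypt M τ) = bpass (xpt M τ) :=
          List.take_left' (bpass_length _)
        rw [htake]
        exact ⟨(bpass_perm _).symm, rfl⟩
    · -- backward membership
      rintro ⟨τ', p, x⟩ hs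
      simp only [Finset.mem_sigma] at hs
      obtain ⟨hτ', hp, hx⟩ := hs
      rw [mem_fib] at hτ' hx
      rw [Finset.mem_range] at hp
      obtain ⟨hpermτ', hiterτ'⟩ := hτ'
      obtain ⟨hpermx, hpassx⟩ := hx
      have hltτ' : ∀ a ∈ τ', a < M := fun a ha => hM a (hpermτ'.mem_iff.mp ha)
      have hltx : ∀ a ∈ x, a < M := fun a ha =>
        hltτ' a (List.take_subset p τ' (hpermx.mem_iff.mp ha))
      have hltd : ∀ a ∈ List.drop p τ', a < M := fun a ha => hltτ' a (List.drop_subset p τ' ha)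
      rw [mem_fib]
      have hpassx' : bpass x = List.take p τ' := by
        rw [← Function.iterate_one bpass]; exact hpassx
      constructor
      · have h0 : (x ++ List.drop p τ').Perm γ' := by
          have h1 : (x ++ List.drop p τ').Perm (List.take p τ' ++ List.drop p τ') :=
            hpermx.append_right _
          rw [List.take_append_drop] at h1
          exact h1.trans hpermτ'
        exact List.perm_middle.trans ((h0.cons M).trans (snoc_perm_cons γ' M).symm)
      · rw [Function.iterate_succ_apply, bpass_append _ _ _ hltx hltd,
          show bpass x ++ (List.drop p τ' ++ [M]) = (bpass x ++ List.drop p τ') ++ [M] by simp,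
          hpassx', List.take_append_drop, bpass_iter_snoc _ _ _ hltτ', hiterτ']
    · -- left inverse
      intro τ hτ
      rw [mem_fib] at hτ
      have hmem : M ∈ τ := hτ.1.mem_iff.mpr (by simp)
      have hsplit := split_at M τ hmem
      have hlt := fib_elts_lt hM hτ.1
      have htake : List.take (xpt M τ).length (bpass (xpt M τ) ++ ypt M τ) = bpass (xpt M τ) :=
        List.take_left' (bpass_length _)
      have hdrop : List.drop (xpt M τ).length (bpass (xpt M τ) ++ ypt M τ) = ypt M τ :=
        List.drop_left' (bpass_length _)
      simp only [hdrop]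
      exact hsplit
    · -- right inverse
      rintro ⟨τ', p, x⟩ hs
      simp only [Finset.mem_sigma] at hs
      obtain ⟨hτ', hp, hx⟩ := hs
      rw [mem_fib] at hτ' hx
      rw [Finset.mem_range] at hp
      have hltτ' : ∀ a ∈ τ', a < M := fun a ha => hM a (hτ'.1.mem_iff.mp ha)
      have hltx : ∀ a ∈ x, a < M := fun a ha =>
        hltτ' a (List.take_subset p τ' (hx.1.mem_iff.mp ha))
      have hMx : M ∉ x := fun h => lt_irrefl M (hltx M h)
      have hspec := xpt_spec M x (List.drop p τ') hMx
      have hxlen : x.length = p := by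
        have := hx.1.length_eq
        rw [List.length_take] at this
        omega
      have hpassx' : bpass x = List.take p τ' := by
        rw [← Function.iterate_one bpass]; exact hx.2
      have hfix : bpass x ++ List.drop p τ' = τ' := by
        rw [hpassx', List.take_append_drop]
      simp only [hspec.1, hspec.2, hfix, hxlen]
    · -- value compatibility
      intro τ hτ
      rw [mem_fib] at hτ
      have hmem : M ∈ τ := hτ.1.mem_iff.mpr (by simp)
      have hsplit := split_at M τ hmem
      have htake : List.take (xpt M τ).length (bpass (xpt M τ) ++ ypt M τ) = bpass (xpt M τ) :=
        List.take_left' (bpass_length _)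
      have hdrop : List.drop (xpt M τ).length (bpass (xpt M τ) ++ ypt M τ) = ypt M τ :=
        List.drop_left' (bpass_length _)
      simp only [hdrop]
      exact congrArg f hsplit.symm
  rw [key, Finset.sum_sigma]
  apply Finset.sum_congr rfl
  intro τ' _
  rw [Finset.sum_sigma]

-- ===== section 5 =====

theorem emb_decomp (β : List ℕ) (h : 1 ≤ mrec β) :
    ∃ γ M, β = γ ++ [M] ∧ ∀ x ∈ γ, x < M := by
  have hne : β ≠ [] := by rintro rfl; rw [mrec_nil] at h; omega
  obtain ⟨γ, M, rfl⟩ := (List.eq_nil_or_concat β).resolve_left hne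
  rw [List.concat_eq_append] at *
  rw [mrec_snoc] at h
  by_cases hc : ∀ x ∈ γ, x < M
  · exact ⟨γ, M, rfl, hc⟩
  · rw [if_neg hc] at h; omega

theorem emb_bpass (ρ : List ℕ) (hnd : ρ.Nodup) (hne : ρ ≠ []) : 1 ≤ mrec (bpass ρ) := by
  obtain ⟨x, M, y, rfl, hx, hy⟩ := exists_max_split ρ hnd hne
  rw [bpass_append x M y hx hy, show bpass x ++ (y ++ [M]) = (bpass x ++ y) ++ [M] by simp,
    mrec_snoc, if_pos]
  · omega
  · intro a ha
    rcases List.mem_append.mp ha with h | h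
    · exact hx a ((bpass_perm x).mem_iff.mp h)
    · exact hy a h


theorem fib_empty (j : ℕ) (hj : 1 ≤ j) (γ : List ℕ) (hnd : γ.Nodup) (hne : γ ≠ [])
    (hemb : ¬ 1 ≤ mrec γ) : fib j γ = ∅ := by
  rw [Finset.eq_empty_iff_forall_notMem]
  intro τ hτ
  rw [mem_fib] at hτ
  obtain ⟨hperm, hiter⟩ := hτ
  obtain ⟨t, rfl⟩ : ∃ t, j = t + 1 := ⟨j - 1, by omega⟩
  rw [Function.iterate_succ_apply'] at hiter
  apply hemb
  rw [← hiter]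
  have hρ : (bpass^[t] τ).Perm γ := (bpass_iter_perm t τ).trans hperm
  apply emb_bpass
  · exact hρ.nodup_iff.mpr hnd
  · intro h
    rw [h] at hρ
    exact hne hρ.nil_eq.symm

noncomputable def Aval (b : ℕ) (β : List ℕ) : ℕ :=
  if β = [] then 1 else if 1 ≤ mrec β then b * (b+1)^(rcnt 0 β - 1) else 0

theorem prefix_sum (b : ℕ) (δ : List ℕ) (hpos : ∀ a ∈ δ, 0 < a) :
    ∑ p ∈ Finset.range (δ.length + 1), Aval b (δ.take p) = (b+1) ^ (rcnt 0 δ) := by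
  induction δ using List.reverseRecOn with
  | nil => simp [Aval, rcnt_nil]
  | append_singleton l a ih =>
    have hp : ∀ x ∈ l, 0 < x := fun x hx => hpos x (by simp [hx])
    have ha : 0 < a := hpos a (by simp)
    have hlen : (l ++ [a]).length = l.length + 1 := by simp
    rw [hlen, Finset.sum_range_succ]
    have htake : ∀ p ∈ Finset.range (l.length + 1),
        Aval b ((l ++ [a]).take p) = Aval b (l.take p) := by
      intro p hp2
      rw [List.take_append_of_le_length (by exact Nat.lt_succ_iff.mp (Finset.mem_range.mp hp2))]
    rw [Finset.sum_congr rfl htake, ih hp]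
    have htake2 : (l ++ [a]).take (l.length + 1) = l ++ [a] := by
      apply List.take_of_length_le; simp
    rw [htake2]
    by_cases h : ∀ x ∈ l, x < a
    · rw [Aval, if_neg (by simp), if_pos (by rw [mrec_snoc, if_pos h]; omega),
        rcnt_snoc_lt 0 a l ha h, Nat.add_sub_cancel, pow_succ]
      ring
    · rw [Aval, if_neg (by simp), if_neg (by rw [mrec_snoc, if_neg h]; omega),
        rcnt_snoc_not 0 a l (fun hh => h hh.2)]
      ring

theorem fib_one_nil : fib 1 [] = {[]} := by
  ext τ
  rw [mem_fib, Finset.mem_singleton]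
  constructor
  · rintro ⟨h, -⟩; exact h.eq_nil
  · rintro rfl
    refine ⟨List.Perm.refl _, ?_⟩
    rw [Function.iterate_one, bpass_nil]

theorem lemA_aux (b N : ℕ) : ∀ (β : List ℕ), β.length = N → β.Nodup → (∀ a ∈ β, 0 < a) →
    ∑ x ∈ fib 1 β, b ^ (rcnt 0 x) = Aval b β := by
  induction N using Nat.strong_induction_on with
  | _ N ih =>
  intro β hN hnd hpos
  subst hN
  rcases eq_or_ne β [] with rfl | hne
  · rw [fib_one_nil, Finset.sum_singleton, rcnt_nil, Aval, if_pos rfl, pow_zero]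
  by_cases hemb : 1 ≤ mrec β
  · obtain ⟨γ, M, rfl, hM⟩ := emb_decomp β hemb
    have hMpos : 0 < M := hpos M (by simp)
    have hγpos : ∀ a ∈ γ, 0 < a := fun a ha => hpos a (by simp [ha])
    have hγnd : γ.Nodup := (List.nodup_append.mp hnd).1
    rw [show (1 : ℕ) = 0 + 1 from rfl, T1 γ M hM 0, fib_zero, Finset.sum_singleton]
    have hterm : ∀ p ∈ Finset.range (γ.length + 1),
        (∑ x ∈ fib 1 (List.take p γ), b ^ rcnt 0 (x ++ M :: List.drop p γ)) =
          b * Aval b (List.take p γ) := by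
      intro p hp2
      have hp3 : p ≤ γ.length := Nat.lt_succ_iff.mp (Finset.mem_range.mp hp2)
      have hsum : ∀ x ∈ fib 1 (List.take p γ),
          b ^ rcnt 0 (x ++ M :: List.drop p γ) = b * b ^ (rcnt 0 x) := by
        intro x hx
        rw [mem_fib] at hx
        have hxlt : ∀ a ∈ x, a < M := fun a ha =>
          hM a (List.take_subset p γ (hx.1.mem_iff.mp ha))
        rw [rcnt_middle x _ M 0 hxlt (fun a ha => hM a (List.drop_subset p γ ha)) hMpos,
          pow_succ]
        ring
      rw [Finset.sum_congr rfl hsum, ← Finset.mul_sum]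
      congr 1
      exact ih (List.take p γ).length (by simp only [List.length_take, List.length_append, List.length_singleton]; omega) _ rfl
        ((List.take_sublist p γ).nodup hγnd)
        (fun a ha => hγpos a (List.take_subset p γ ha))
    rw [Finset.sum_congr rfl hterm, ← Finset.mul_sum, prefix_sum b γ hγpos]
    rw [Aval, if_neg (by simp), if_pos hemb, rcnt_snoc_lt 0 M γ hMpos hM, Nat.add_sub_cancel]
  · rw [fib_empty 1 le_rfl β hnd hne hemb, Finset.sum_empty, Aval, if_neg hne, if_neg hemb]

theorem lemA (b : ℕ) (β : List ℕ) (hnd : β.Nodup) (hpos : ∀ a ∈ β, 0 < a) :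
    ∑ x ∈ fib 1 β, b ^ (rcnt 0 x) = Aval b β :=
  lemA_aux b β.length β rfl hnd hpos

-- ===== section 6 =====

def asc (b j : ℕ) : ℕ := ∏ t ∈ Finset.range j, (b + t)

@[simp] theorem asc_zero (b : ℕ) : asc b 0 = 1 := by simp [asc]

theorem asc_succ' (b j : ℕ) : asc b (j+1) = b * asc (b+1) j := by
  rw [asc, Finset.prod_range_succ', add_zero, mul_comm, asc]
  congr 1
  apply Finset.prod_congr rfl
  intro k _
  omega

noncomputable def Esum (b j : ℕ) (γ : List ℕ) : ℕ :=
  ∑ τ ∈ fib j γ, if 1 ≤ mrec τ then b ^ (rcnt 0 τ - 1) else 0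

noncomputable def Fsum (b j : ℕ) (γ : List ℕ) : ℕ :=
  ∑ τ ∈ fib j γ, if 1 ≤ mrec τ then 0 else b ^ (rcnt 0 τ)

theorem mrec_middle_zero (x y : List ℕ) (M : ℕ) (hy : ∀ a ∈ y, a < M) (hne : y ≠ []) :
    mrec (x ++ M :: y) = 0 := by
  obtain ⟨y', c, rfl⟩ := (List.eq_nil_or_concat y).resolve_left hne
  rw [List.concat_eq_append] at *
  rw [show x ++ M :: (y' ++ [c]) = (x ++ M :: y') ++ [c] by simp, mrec_snoc, if_neg]
  intro hall
  exact absurd (hall M (by simp)) (by have := hy c (by simp); omega)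

theorem sum_dropLast (b : ℕ) (τ' : List ℕ) (hne : τ' ≠ []) (hpos : ∀ a ∈ τ', 0 < a) :
    ∑ p ∈ Finset.range τ'.length, Aval b (τ'.take p) =
      (if 1 ≤ mrec τ' then (b+1)^(rcnt 0 τ' - 1) else (b+1)^(rcnt 0 τ')) := by
  obtain ⟨w, c, rfl⟩ := (List.eq_nil_or_concat τ').resolve_left hne
  rw [List.concat_eq_append] at *
  have hw : ∀ a ∈ w, 0 < a := fun a ha => hpos a (by simp [ha])
  have hc : 0 < c := hpos c (by simp)
  have hlen : (w ++ [c]).length = w.length + 1 := by simp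
  rw [hlen]
  have hcong : ∀ p ∈ Finset.range (w.length + 1),
      Aval b ((w ++ [c]).take p) = Aval b (w.take p) := fun p hp => by
    rw [List.take_append_of_le_length (Nat.lt_succ_iff.mp (Finset.mem_range.mp hp))]
  rw [Finset.sum_congr rfl hcong, prefix_sum b w hw]
  by_cases hall : ∀ x ∈ w, x < c
  · rw [if_pos (by rw [mrec_snoc, if_pos hall]; omega),
      rcnt_snoc_lt 0 c w hc hall, Nat.add_sub_cancel]
  · rw [if_neg (by rw [mrec_snoc, if_neg hall]; omega),
      rcnt_snoc_not 0 c w (fun hh => hall hh.2)]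

theorem MT (N : ℕ) : ∀ (γ : List ℕ), γ.length = N → γ.Nodup → (∀ a ∈ γ, 0 < a) →
    mrec γ < rcnt 0 γ → ∀ (j b : ℕ),
    (Esum b j γ = if j < mrec γ then asc b j * (b+j)^(rcnt 0 γ - j - 1) else 0)
    ∧ (Fsum b j γ = if j < mrec γ then j * asc b j * (b+j)^(rcnt 0 γ - j - 1)
        else if j = mrec γ then asc b j * (b+j)^(rcnt 0 γ - j) else 0) := by
  induction N using Nat.strong_induction_on with
  | _ N ih =>
  intro γ hN hnd hpos hkm j b
  have hne : γ ≠ [] := by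
    rintro rfl
    rw [mrec_nil, rcnt_nil] at hkm
    omega
  cases j with
  | zero =>
    rw [Esum, Fsum, fib_zero, Finset.sum_singleton, Finset.sum_singleton]
    constructor
    · by_cases h : 1 ≤ mrec γ
      · rw [if_pos h, if_pos (by omega)]; simp [asc]
      · rw [if_neg h, if_neg (by omega)]
    · by_cases h : 1 ≤ mrec γ
      · rw [if_pos h, if_pos (by omega)]; simp
      · rw [if_neg h, if_neg (by omega), if_pos (by omega)]; simp [asc]
  | succ t =>
    by_cases hm : 1 ≤ mrec γ
    swap
    · rw [Esum, Fsum, fib_empty (t+1) (by omega) γ hnd hne hm, Finset.sum_empty,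
        Finset.sum_empty]
      constructor
      · rw [if_neg (by omega)]
      · rw [if_neg (by omega), if_neg (by omega)]
    obtain ⟨γ', M, rfl, hM⟩ := emb_decomp γ hm
    have hMpos : 0 < M := hpos M (by simp)
    have hγ'pos : ∀ a ∈ γ', 0 < a := fun a ha => hpos a (by simp [ha])
    have hγ'nd : γ'.Nodup := (List.nodup_append.mp hnd).1
    have hk' : rcnt 0 (γ' ++ [M]) = rcnt 0 γ' + 1 := rcnt_snoc_lt 0 M γ' hMpos hM
    have hm' : mrec (γ' ++ [M]) = mrec γ' + 1 := by rw [mrec_snoc, if_pos hM]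
    have hkm' : mrec γ' < rcnt 0 γ' := by omega
    have hγ'ne : γ' ≠ [] := by
      rintro rfl
      rw [rcnt_nil, mrec_nil] at hkm'
      omega
    have hlen' : γ'.length < N := by rw [← hN]; simp
    have IH := ih γ'.length hlen' γ' rfl hγ'nd hγ'pos hkm'
    -- per-τ' facts
    have hfibfact : ∀ τ' ∈ fib t γ', τ'.Perm γ' := fun τ' h => (mem_fib.mp h).1
    -- E recursion
    have hE : Esum b (t+1) (γ' ++ [M]) = b * Esum (b+1) t γ' := by
      rw [Esum, T1 γ' M hM t, Esum, Finset.mul_sum]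
      apply Finset.sum_congr rfl
      intro τ' hτ'
      have hpermτ' : τ'.Perm γ' := hfibfact τ' hτ'
      have hlt : ∀ a ∈ τ', a < M := fun a ha => hM a (hpermτ'.mem_iff.mp ha)
      have hτ'pos : ∀ a ∈ τ', 0 < a := fun a ha => hγ'pos a (hpermτ'.mem_iff.mp ha)
      have hτ'nd : τ'.Nodup := hpermτ'.nodup_iff.mpr hγ'nd
      have hτ'ne : τ' ≠ [] := fun h => hγ'ne (by rw [h] at hpermτ'; exact hpermτ'.nil_eq.symm)
      have hpt : ∀ p ∈ Finset.range (τ'.length + 1),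
          (∑ x ∈ fib 1 (List.take p τ'),
            if 1 ≤ mrec (x ++ M :: List.drop p τ')
            then b ^ (rcnt 0 (x ++ M :: List.drop p τ') - 1) else 0)
          = if p = τ'.length then Aval b τ' else 0 := by
        intro p hp
        have hple : p ≤ τ'.length := Nat.lt_succ_iff.mp (Finset.mem_range.mp hp)
        by_cases hpe : p = τ'.length
        · subst hpe
          rw [if_pos rfl, List.take_length, ← lemA b τ' hτ'nd hτ'pos]
          apply Finset.sum_congr rfl
          intro x hx
          have hxlt : ∀ a ∈ x, a < M := fun a ha =>
            hlt a ((mem_fib.mp hx).1.mem_iff.mp ha)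
          rw [List.drop_length, if_pos (by
              rw [show x ++ [M] = x ++ [M] from rfl, mrec_snoc, if_pos hxlt]; omega),
            rcnt_middle x [] M 0 hxlt (by simp) hMpos, Nat.add_sub_cancel]
        · rw [if_neg hpe]
          apply Finset.sum_eq_zero
          intro x hx
          rw [if_neg (by
            rw [mrec_middle_zero x _ M (fun a ha => hlt a (List.drop_subset p τ' ha))
              (by rw [ne_eq, List.drop_eq_nil_iff]; omega)]
            omega)]
      rw [Finset.sum_congr rfl hpt, Finset.sum_ite_eq' _ τ'.length (fun _ => Aval b τ'),
        if_pos (Finset.mem_range.mpr (by omega))]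
      rw [Aval, if_neg hτ'ne]
      by_cases h : 1 ≤ mrec τ'
      · rw [if_pos h, if_pos h]
      · rw [if_neg h, if_neg h, mul_zero]
    -- F recursion
    have hF : Fsum b (t+1) (γ' ++ [M]) = b * (Esum (b+1) t γ' + Fsum (b+1) t γ') := by
      rw [Fsum, T1 γ' M hM t, Esum, Fsum, ← Finset.sum_add_distrib, Finset.mul_sum]
      apply Finset.sum_congr rfl
      intro τ' hτ'
      have hpermτ' : τ'.Perm γ' := hfibfact τ' hτ'
      have hlt : ∀ a ∈ τ', a < M := fun a ha => hM a (hpermτ'.mem_iff.mp ha)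
      have hτ'pos : ∀ a ∈ τ', 0 < a := fun a ha => hγ'pos a (hpermτ'.mem_iff.mp ha)
      have hτ'nd : τ'.Nodup := hpermτ'.nodup_iff.mpr hγ'nd
      have hτ'ne : τ' ≠ [] := fun h => hγ'ne (by rw [h] at hpermτ'; exact hpermτ'.nil_eq.symm)
      have hpt : ∀ p ∈ Finset.range (τ'.length + 1),
          (∑ x ∈ fib 1 (List.take p τ'),
            if 1 ≤ mrec (x ++ M :: List.drop p τ') then 0
            else b ^ (rcnt 0 (x ++ M :: List.drop p τ')))
          = if p = τ'.length then 0 else b * Aval b (List.take p τ') := by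
        intro p hp
        have hple : p ≤ τ'.length := Nat.lt_succ_iff.mp (Finset.mem_range.mp hp)
        by_cases hpe : p = τ'.length
        · subst hpe
          rw [if_pos rfl]
          apply Finset.sum_eq_zero
          intro x hx
          have hxlt : ∀ a ∈ x, a < M := fun a ha =>
            hlt a (List.take_subset _ τ' ((mem_fib.mp hx).1.mem_iff.mp ha))
          rw [List.drop_length, if_pos (by rw [mrec_snoc, if_pos hxlt]; omega)]
        · rw [if_neg hpe, ← lemA b (List.take p τ')
            ((List.take_sublist p τ').nodup hτ'nd)
            (fun a ha => hτ'pos a (List.take_subset p τ' ha)), Finset.mul_sum]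
          apply Finset.sum_congr rfl
          intro x hx
          have hxlt : ∀ a ∈ x, a < M := fun a ha =>
            hlt a (List.take_subset p τ' ((mem_fib.mp hx).1.mem_iff.mp ha))
          rw [if_neg (by
            rw [mrec_middle_zero x _ M (fun a ha => hlt a (List.drop_subset p τ' ha))
              (by rw [ne_eq, List.drop_eq_nil_iff]; omega)]
            omega),
            rcnt_middle x _ M 0 hxlt (fun a ha => hlt a (List.drop_subset p τ' ha)) hMpos,
            pow_succ]
          ring
      rw [Finset.sum_congr rfl hpt]
      rw [Finset.sum_range_succ, if_pos rfl, add_zero]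
      have hcong2 : ∀ p ∈ Finset.range τ'.length,
          (if p = τ'.length then 0 else b * Aval b (List.take p τ'))
          = b * Aval b (List.take p τ') := fun p hp => by
        rw [if_neg (by have := Finset.mem_range.mp hp; omega)]
      rw [Finset.sum_congr rfl hcong2, ← Finset.mul_sum,
        sum_dropLast b τ' hτ'ne hτ'pos]
      by_cases h : 1 ≤ mrec τ'
      · rw [if_pos h, if_pos h, if_pos h, add_zero]
      · rw [if_neg h, if_neg h, if_neg h, zero_add]
    -- closed forms
    rw [hE, hF, hk', hm']
    obtain ⟨hE', hF'⟩ := IH t (b+1)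
    rw [hE', hF']
    have hbt : b + 1 + t = b + (t + 1) := by omega
    constructor
    · by_cases hlt : t < mrec γ'
      · rw [if_pos hlt, if_pos (by omega)]
        have hexp : rcnt 0 γ' - t - 1 = rcnt 0 γ' + 1 - (t+1) - 1 := by omega
        rw [asc_succ', hbt, hexp]
        ring
      · rw [if_neg hlt, if_neg (by omega), mul_zero]
    · by_cases hlt : t < mrec γ'
      · rw [if_pos hlt, if_pos hlt, if_pos (by omega)]
        have hexp : rcnt 0 γ' - t - 1 = rcnt 0 γ' + 1 - (t+1) - 1 := by omega
        rw [asc_succ', hbt, hexp]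
        ring
      · rw [if_neg hlt, if_neg hlt, if_neg (show ¬(t + 1 < mrec γ' + 1) by omega)]
        by_cases heq : t = mrec γ'
        · rw [if_pos heq, if_pos (by omega)]
          have hexp : rcnt 0 γ' - t = rcnt 0 γ' + 1 - (t+1) := by omega
          rw [asc_succ', hbt, hexp]
          ring
        · rw [if_neg heq, if_neg (by omega)]
          ring

-- ===== section 7 =====

theorem rcnt_le_length' (c : ℕ) (l : List ℕ) : rcnt c l ≤ l.length := by
  induction l generalizing c with
  | nil => simp
  | cons a l ih =>
    rw [rcnt_cons]
    by_cases h : c < a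
    · rw [if_pos h]; have := ih a; simp; omega
    · rw [if_neg h]; have := ih c; simp; omega

theorem asc_one (j : ℕ) : asc 1 j = j.factorial := by
  induction j with
  | zero => simp [asc]
  | succ j ih =>
    rw [asc, Finset.prod_range_succ, ← asc, ih, Nat.factorial_succ]
    ring

theorem leaf_iff (n : ℕ) (σ : List ℕ) (hσ : σ.Perm (idList n)) (hn2 : 2 ≤ n) :
    IsLeafNode n σ ↔ mrec σ = 0 := by
  have hσlen : σ.length = n := hσ.length_eq.trans (idList_length n)
  constructor
  · intro hleaf
    by_contra h
    have hemb : 1 ≤ mrec σ := by omega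
    obtain ⟨γ, M, rfl, hM⟩ := emb_decomp σ hemb
    apply hleaf
    refine ⟨M :: γ, ?_, ?_, bpass_cons_max M γ hM⟩
    · exact ((snoc_perm_cons γ M).symm.trans hσ)
    · obtain ⟨c, γ₂, rfl⟩ : ∃ c γ₂, γ = c :: γ₂ := by
        cases γ with
        | nil => simp at hσlen; omega
        | cons c γ₂ => exact ⟨c, γ₂, rfl⟩
      intro h2
      rw [List.cons_append] at h2
      injection h2 with h3 h4
      have := hM c (by simp)
      omega
  · intro h0 ⟨ρ, hρperm, hρne, hρpass⟩
    have hρlen : ρ.length = n := hρperm.length_eq.trans (idList_length n)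
    have hρnd : ρ.Nodup := hρperm.nodup_iff.mpr (idList_nodup n)
    have : 1 ≤ mrec (bpass ρ) := emb_bpass ρ hρnd (by
      intro h; rw [h] at hρlen; simp at hρlen; omega)
    rw [hρpass] at this
    omega

theorem stmt_18_proof (n k m : ℕ) (π : List ℕ) (hπ : IsPermList n π) (hne : π ≠ idList n)
    (hk : ltrCount π = k) (hm : suffLen π = m) (hm1 : 1 ≤ m) :
    Set.ncard {σ : List ℕ | IsNode n π σ ∧ IsLeafNode n σ} =
      (∑ j ∈ Finset.Icc 1 (m - 1), Nat.factorial j * j * (j + 1) ^ (k - j - 1)) +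
        Nat.factorial m * (m + 1) ^ (k - m) ∧
    (∀ j, 1 ≤ j → j < m → Set.ncard {σ : List ℕ | IsNodeAt n π σ j ∧ IsLeafNode n σ} =
      Nat.factorial j * j * (j + 1) ^ (k - j - 1)) ∧
    Set.ncard {σ : List ℕ | IsNodeAt n π σ m ∧ IsLeafNode n σ} =
      Nat.factorial m * (m + 1) ^ (k - m) := by
  classical
  have hπnd : π.Nodup := hπ.nodup_iff.mpr (idList_nodup n)
  have hπpos : ∀ a ∈ π, 0 < a := fun a ha => idList_pos n a (hπ.subset ha)
  have hπlen : π.length = n := hπ.length_eq.trans (idList_length n)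
  have hkk : rcnt 0 π = k := by rw [← ltrCount_eq_rcnt π hπpos, hk]
  have hmm : mrec π = m := by rw [← suffLen_eq_mrec, hm]
  have hkm : mrec π < rcnt 0 π := by
    rcases lt_or_eq_of_le (mrec_le_rcnt π hπpos) with h | h
    · exact h
    · exact absurd (List.Perm.eq_of_pairwise'
        (sorted_of_rcnt_eq_mrec π hπpos h.symm) (idList_sorted n) hπ) hne
  have hn2 : 2 ≤ n := by
    have h1 := rcnt_le_length' 0 π
    omega
  have hNoFix : ∀ d, 1 ≤ d → bpass^[d] π ≠ π := fun d hd h =>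
    hne (eq_idList_of_iter_fix n d π hπ hd h)
  have hMT := MT π.length π rfl hπnd hπpos hkm
  set A : ℕ → Finset (List ℕ) := fun j => (fib j π).filter (fun τ => mrec τ = 0) with hA
  -- card of A j
  have cardA : ∀ j, (A j).card = Fsum 1 j π := by
    intro j
    rw [hA, Fsum, Finset.card_filter]
    apply Finset.sum_congr rfl
    intro τ _
    by_cases h : mrec τ = 0
    · rw [if_pos h, if_neg (by omega), one_pow]
    · rw [if_neg h, if_pos (by omega)]
  have cardAval : ∀ j, (A j).card =
      (if j < m then j * Nat.factorial j * (j + 1) ^ (k - j - 1)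
        else if j = m then Nat.factorial m * (m + 1) ^ (k - m) else 0) := by
    intro j
    rw [cardA, (hMT j 1).2, hmm, hkk, asc_one]
    by_cases h1 : j < m
    · rw [if_pos h1, if_pos h1, Nat.add_comm 1 j]
    · rw [if_neg h1, if_neg h1]
      by_cases h2 : j = m
      · rw [if_pos h2, if_pos h2, h2, Nat.add_comm 1 m]
      · rw [if_neg h2, if_neg h2]
  -- fib empty above m
  have fibEmpty : ∀ j, m < j → fib j π = ∅ := by
    intro j hj
    rw [← Finset.card_eq_zero]
    have h1 : (fib j π).card = Esum 1 j π + Fsum 1 j π := by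
      rw [Esum, Fsum, ← Finset.sum_add_distrib, Finset.card_eq_sum_ones]
      apply Finset.sum_congr rfl
      intro τ _
      by_cases h : 1 ≤ mrec τ
      · rw [if_pos h, if_pos h, one_pow, add_zero]
      · rw [if_neg h, if_neg h, one_pow, zero_add]
    rw [h1, (hMT j 1).1, (hMT j 1).2, hmm, if_neg (by omega), if_neg (by omega),
      if_neg (by omega)]
  -- no two heights
  have heightUniq : ∀ j j', j < j' → ∀ σ, σ ∈ fib j π → σ ∈ fib j' π → False := by
    intro j j' hjj σ h1 h2
    have e1 := (mem_fib.mp h1).2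
    have e2 := (mem_fib.mp h2).2
    have : bpass^[j' - j] π = π := by
      conv_lhs => rw [← e1]
      rw [← Function.iterate_add_apply, show j' - j + j = j' from by omega, e2]
    exact hNoFix (j' - j) (by omega) this
  -- A j as the nodeAt set
  have setAt : ∀ j, 1 ≤ j →
      {σ : List ℕ | IsNodeAt n π σ j ∧ IsLeafNode n σ} = ↑(A j) := by
    intro j hj
    ext σ
    simp only [Set.mem_setOf_eq, Finset.coe_filter, hA, Set.mem_setOf_eq, mem_fib]
    constructor
    · rintro ⟨⟨hperm, hiter, -⟩, hleaf⟩
      have hσπ : σ.Perm π := hperm.trans hπ.symm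
      exact ⟨⟨hσπ, hiter⟩, (leaf_iff n σ hperm hn2).mp hleaf⟩
    · rintro ⟨⟨hσπ, hiter⟩, h0⟩
      have hperm : σ.Perm (idList n) := hσπ.trans hπ
      refine ⟨⟨hperm, hiter, ?_⟩, (leaf_iff n σ hperm hn2).mpr h0⟩
      intro i hi hcon
      apply hNoFix (j - i) (by omega)
      conv_lhs => rw [← hcon]
      rw [← Function.iterate_add_apply, show j - i + i = j from by omega, hiter]
  -- total set
  have setTot : {σ : List ℕ | IsNode n π σ ∧ IsLeafNode n σ} =
      ↑((Finset.Icc 1 m).biUnion A) := by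
    ext σ
    simp only [Set.mem_setOf_eq, Finset.coe_biUnion, Set.mem_iUnion, Finset.mem_coe,
      Finset.mem_Icc, hA, Finset.mem_filter, mem_fib]
    constructor
    · rintro ⟨⟨hperm, j, hiter⟩, hleaf⟩
      have hσπ : σ.Perm π := hperm.trans hπ.symm
      have h0 : mrec σ = 0 := (leaf_iff n σ hperm hn2).mp hleaf
      have hj1 : 1 ≤ j := by
        rcases Nat.eq_zero_or_pos j with rfl | h
        · simp at hiter
          rw [hiter] at h0
          omega
        · exact h
      have hjm : j ≤ m := by
        by_contra h
        have : σ ∈ fib j π := mem_fib.mpr ⟨hσπ, hiter⟩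
        rw [fibEmpty j (by omega)] at this
        exact absurd this (Finset.notMem_empty σ)
      exact ⟨j, ⟨hj1, hjm⟩, ⟨hσπ, hiter⟩, h0⟩
    · rintro ⟨j, -, ⟨hσπ, hiter⟩, h0⟩
      have hperm : σ.Perm (idList n) := hσπ.trans hπ
      exact ⟨⟨hperm, j, hiter⟩, (leaf_iff n σ hperm hn2).mpr h0⟩
  have hdisj : ∀ j ∈ Finset.Icc 1 m, ∀ j' ∈ Finset.Icc 1 m, j ≠ j' →
      Disjoint (A j) (A j') := by
    intro j _ j' _ hjj
    rw [Finset.disjoint_left]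
    intro σ h1 h2
    rw [hA, Finset.mem_filter] at h1 h2
    rcases Nat.lt_or_ge j j' with h | h
    · exact heightUniq j j' h σ h1.1 h2.1
    · exact heightUniq j' j (by omega) σ h2.1 h1.1
  refine ⟨?_, ?_, ?_⟩
  · rw [setTot, Set.ncard_coe_finset, Finset.card_biUnion hdisj]
    have hsum : ∀ j ∈ Finset.Icc 1 m, (A j).card =
        (if j < m then j * Nat.factorial j * (j + 1) ^ (k - j - 1)
          else if j = m then Nat.factorial m * (m + 1) ^ (k - m) else 0) :=
      fun j _ => cardAval j
    rw [Finset.sum_congr rfl hsum]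
    rw [show m = (m - 1) + 1 from by omega, Finset.sum_Icc_succ_top (by omega)]
    rw [show (m - 1) + 1 = m from by omega]
    congr 1
    · apply Finset.sum_congr rfl
      intro j hj
      have hj' := Finset.mem_Icc.mp hj
      rw [if_pos (by omega)]
      ring
    · rw [if_neg (by omega), if_pos rfl]
  · intro j hj1 hjm
    rw [setAt j hj1, Set.ncard_coe_finset, cardAval j, if_pos hjm]
    ring
  · rw [setAt m hm1, Set.ncard_coe_finset, cardAval m, if_neg (by omega), if_pos rfl]

end BubbleAux

/-- For `π ≠ id_n` with `k` left-to-right maxima and longest suffix of left-to-right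
maxima of length `m ≥ 1`: the number of leaves of `T(π)` is
`∑_{j=1}^{m-1} j!·j·(j+1)^(k-j-1) + m!·(m+1)^(k-m)`; moreover the number of leaves at
height `j` is `j!·j·(j+1)^(k-j-1)` for `1 ≤ j < m`, and `m!·(m+1)^(k-m)` for `j = m`. -/
theorem stmt_18 (n k m : ℕ) (π : List ℕ) (hπ : IsPermList n π) (hne : π ≠ idList n)
    (hk : ltrCount π = k) (hm : suffLen π = m) (hm1 : 1 ≤ m) :
    Set.ncard {σ : List ℕ | IsNode n π σ ∧ IsLeafNode n σ} =
      (∑ j ∈ Finset.Icc 1 (m - 1), Nat.factorial j * j * (j + 1) ^ (k - j - 1)) +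
        Nat.factorial m * (m + 1) ^ (k - m) ∧
    (∀ j, 1 ≤ j → j < m → Set.ncard {σ : List ℕ | IsNodeAt n π σ j ∧ IsLeafNode n σ} =
      Nat.factorial j * j * (j + 1) ^ (k - j - 1)) ∧
    Set.ncard {σ : List ℕ | IsNodeAt n π σ m ∧ IsLeafNode n σ} =
      Nat.factorial m * (m + 1) ^ (k - m) := by
  exact stmt_18_proof n k m π hπ hne hk hm hm1
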